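/- Let K be a field of characteristic 0, E = K(a,b,c,d), p an odd prime, and u, v, w ∈ E as in the Chern connection computation for the split symmetric 2×2 matrix q (u = ((a^p d^p + b^p c^p)(ad+bc)^p − 2^{p+1}a^p b^p c^p d^p)/(a^p d^p − b^p c^p)^2, v = b^p d^p·(2^p(a^p d^p+b^p c^p) − 2(ad+bc)^p)/(a^p d^p − b^p c^p)^2, w = a^p c^p·(2^p(a^p d^p+b^p c^p) − 2(ad+bc)^p)/(a^p d^p − b^p c^p)^2). Then the polynomial t^4 − 4u t^2 + 4vw is irreducible over E. -/

import Mathlib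

section Quartic
open Polynomial

/-- Irreducibility criterion for a biquadratic `X⁴ + A X² + B` over a field:
if neither `B` nor `A² - 4B` is a square, the polynomial is irreducible. -/
theorem quartic_irred {F : Type*} [Field F] (A B : F)
    (hB : ∀ z : F, z ^ 2 ≠ B) (hD : ∀ z : F, z ^ 2 ≠ A ^ 2 - 4 * B) :
    Irreducible (X ^ 4 + C A * X ^ 2 + C B : F[X]) := by
  set g : F[X] := X ^ 4 + C A * X ^ 2 + C B with hgdef
  have hg4 : g.natDegree = 4 := by unfold g; compute_degree!
  have hg0 : g ≠ 0 := fun h => by simp [h] at hg4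
  have hroot : ∀ r : F, ¬ g.IsRoot r := by
    intro r hr
    have h : r ^ 4 + A * r ^ 2 + B = 0 := by
      simpa [hgdef, IsRoot] using hr
    exact hD (2 * r ^ 2 + A) (by linear_combination (4 : F) * h)
  have hlin : ∀ h : F[X], h.natDegree = 1 → h ∣ g → False := by
    intro h hh hdvd
    have hc1 : h.coeff 1 ≠ 0 := by
      have := Polynomial.leadingCoeff_ne_zero.mpr (fun h0 => by simp [h0] at hh : h ≠ 0)
      rwa [Polynomial.leadingCoeff, hh] at this
    have hr : h.IsRoot (-(h.coeff 0) / h.coeff 1) := by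
      conv_lhs => rw [Polynomial.eq_X_add_C_of_natDegree_le_one (le_of_eq hh)]
      simp only [IsRoot, Polynomial.eval_add, Polynomial.eval_mul, Polynomial.eval_C,
        Polynomial.eval_X]
      field_simp
      ring
    exact hroot _ (hr.dvd hdvd)
  constructor
  · intro hu
    have := Polynomial.natDegree_eq_zero_of_isUnit hu
    omega
  · intro f₁ f₂ hfg
    by_contra hcon
    push_neg at hcon
    obtain ⟨hu1, hu2⟩ := hcon
    have h1 : f₁ ≠ 0 := by rintro rfl; simp at hfg; exact hg0 hfg
    have h2 : f₂ ≠ 0 := by rintro rfl; simp at hfg; exact hg0 hfg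
    have hdeg : f₁.natDegree + f₂.natDegree = 4 := by
      rw [← Polynomial.natDegree_mul h1 h2, ← hfg, hg4]
    have hd1 : f₁.natDegree ≠ 0 := by
      intro h
      exact hu1 (by
        rw [Polynomial.eq_C_of_natDegree_eq_zero h]
        exact Polynomial.isUnit_C.mpr (Ne.isUnit (fun hc => h1 (by
          rw [Polynomial.eq_C_of_natDegree_eq_zero h, hc, map_zero]))))
    have hd2 : f₂.natDegree ≠ 0 := by
      intro h
      exact hu2 (by
        rw [Polynomial.eq_C_of_natDegree_eq_zero h]
        exact Polynomial.isUnit_C.mpr (Ne.isUnit (fun hc => h2 (by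
          rw [Polynomial.eq_C_of_natDegree_eq_zero h, hc, map_zero]))))
    rcases (by omega : f₁.natDegree = 1 ∨ f₁.natDegree = 3 ∨ f₁.natDegree = 2) with h | h | h
    · exact hlin f₁ h ⟨f₂, hfg⟩
    · exact hlin f₂ (by omega) ⟨f₁, by rw [hfg, mul_comm]⟩
    · have hdf2 : f₂.natDegree = 2 := by omega
      set a0 := f₁.coeff 0; set a1 := f₁.coeff 1; set a2 := f₁.coeff 2
      set b0 := f₂.coeff 0; set b1 := f₂.coeff 1; set b2 := f₂.coeff 2
      have ha2 : a2 ≠ 0 := by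
        have := Polynomial.leadingCoeff_ne_zero.mpr h1
        rwa [Polynomial.leadingCoeff, h] at this
      have ha3 : f₁.coeff 3 = 0 := Polynomial.coeff_eq_zero_of_natDegree_lt (by omega)
      have ha4 : f₁.coeff 4 = 0 := Polynomial.coeff_eq_zero_of_natDegree_lt (by omega)
      have hb3 : f₂.coeff 3 = 0 := Polynomial.coeff_eq_zero_of_natDegree_lt (by omega)
      have hb4 : f₂.coeff 4 = 0 := Polynomial.coeff_eq_zero_of_natDegree_lt (by omega)
      have hcoeff : ∀ k, g.coeff k = ∑ j ∈ Finset.range (k + 1), f₁.coeff j * f₂.coeff (k - j) := by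
        intro k
        rw [hfg, Polynomial.coeff_mul, Finset.Nat.sum_antidiagonal_eq_sum_range_succ_mk]
      have e0 : B = a0 * b0 := by
        have := hcoeff 0
        simpa [hgdef, Finset.sum_range_succ, coeff_X_pow, coeff_C] using this
      have e1 : (0 : F) = a0 * b1 + a1 * b0 := by
        have := hcoeff 1
        simpa [hgdef, Finset.sum_range_succ, coeff_X_pow, coeff_C] using this
      have e2 : A = a0 * b2 + a1 * b1 + a2 * b0 := by
        have := hcoeff 2
        simpa [hgdef, Finset.sum_range_succ, coeff_X_pow, coeff_C] using this
      have e3 : (0 : F) = a0 * f₂.coeff 3 + a1 * b2 + a2 * b1 + f₁.coeff 3 * b0 := by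
        have := hcoeff 3
        simpa [hgdef, Finset.sum_range_succ, coeff_X_pow, coeff_C] using this
      have e4 : (1 : F) = a0 * f₂.coeff 4 + a1 * f₂.coeff 3 + a2 * b2 + f₁.coeff 3 * b1
          + f₁.coeff 4 * b0 := by
        have := hcoeff 4
        simpa [hgdef, Finset.sum_range_succ, coeff_X_pow, coeff_C] using this
      rw [ha3, hb3] at e3
      rw [ha3, ha4, hb3, hb4] at e4
      by_cases ha1 : a1 = 0
      · have hb1 : b1 = 0 := by
          have : a2 * b1 = 0 := by linear_combination -e3 - b2 * ha1
          exact (mul_eq_zero.mp this).resolve_left ha2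
        rw [ha1, hb1] at e2
        refine hD (a0 * b2 - a2 * b0) ?_
        linear_combination (-(A + a0 * b2 + a2 * b0)) * e2 + 4 * e0 + 4 * a0 * b0 * e4
      · have h5 : a1 * (a2 * b0 - a0 * b2) = 0 := by linear_combination a0 * e3 - a2 * e1
        have h6 : a2 * b0 = a0 * b2 := by
          have := (mul_eq_zero.mp h5).resolve_left ha1
          linear_combination this
        refine hB (a0 * b2) ?_
        linear_combination -a0 * b2 * h6 - e0 - a0 * b0 * e4

end Quartic

open MvPolynomial

noncomputable section

/-- The rational function field `E = K(a,b,c,d)`, realized as the fraction field of the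
polynomial ring in the four indeterminates `a, b, c, d`. -/
abbrev E (K : Type) [Field K] := FractionRing (MvPolynomial (Fin 4) K)

/-- The transcendental generator `a` of `E = K(a,b,c,d)`. -/
def va (K : Type) [Field K] : E K := algebraMap (MvPolynomial (Fin 4) K) (E K) (X 0)
/-- The transcendental generator `b` of `E = K(a,b,c,d)`. -/
def vb (K : Type) [Field K] : E K := algebraMap (MvPolynomial (Fin 4) K) (E K) (X 1)
/-- The transcendental generator `c` of `E = K(a,b,c,d)`. -/
def vc (K : Type) [Field K] : E K := algebraMap (MvPolynomial (Fin 4) K) (E K) (X 2)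
/-- The transcendental generator `d` of `E = K(a,b,c,d)`. -/
def vd (K : Type) [Field K] : E K := algebraMap (MvPolynomial (Fin 4) K) (E K) (X 3)

set_option synthInstance.maxHeartbeats 1000000
set_option maxHeartbeats 2000000

/-- A nonzero polynomial maps to a nonzero element of the fraction field. -/
theorem map_ne_zero' {K : Type} [Field K] (m : MvPolynomial (Fin 4) K) (hm : m ≠ 0) :
    algebraMap (MvPolynomial (Fin 4) K) (E K) m ≠ 0 := fun h0 =>
  hm (IsFractionRing.injective (MvPolynomial (Fin 4) K) (E K) (by rw [h0, map_zero]))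

/-- A polynomial with a nonzero value is nonzero. -/
theorem ne_zero_of_eval {K : Type} [Field K] (m : MvPolynomial (Fin 4) K) (pt : Fin 4 → K)
    (h : eval pt m ≠ 0) : m ≠ 0 := fun h0 => h (by rw [h0, map_zero])

/-- A square in `E K` which lies in the image of the polynomial ring is the square of a
polynomial. -/
theorem sq_descend {K : Type} [Field K] (r : MvPolynomial (Fin 4) K) (x : E K)
    (h : x ^ 2 = algebraMap (MvPolynomial (Fin 4) K) (E K) r) :
    ∃ q : MvPolynomial (Fin 4) K, q ^ 2 = r := by
  have hint : IsIntegral (MvPolynomial (Fin 4) K) x := by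
    refine ⟨Polynomial.X ^ 2 - Polynomial.C r, Polynomial.monic_X_pow_sub_C r two_ne_zero, ?_⟩
    simp [Polynomial.eval₂_sub, h]
  obtain ⟨q, hq⟩ := IsIntegrallyClosed.isIntegral_iff.mp hint
  refine ⟨q, IsFractionRing.injective (MvPolynomial (Fin 4) K) (E K) ?_⟩
  rw [map_pow, hq, h]

/-- The specialization `a ↦ X, b ↦ 1, c ↦ 1, d ↦ 1`. -/
def sp {K : Type} [Field K] : MvPolynomial (Fin 4) K →ₐ[K] Polynomial K :=
  MvPolynomial.aeval ![Polynomial.X, 1, 1, 1]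

theorem sp_X0 {K : Type} [Field K] : sp (K := K) (X 0) = Polynomial.X := by simp [sp]
theorem sp_X1 {K : Type} [Field K] : sp (K := K) (X 1) = 1 := by simp [sp]
theorem sp_X2 {K : Type} [Field K] : sp (K := K) (X 2) = 1 := by simp [sp]
theorem sp_X3 {K : Type} [Field K] : sp (K := K) (X 3) = 1 := by simp [sp]

/-- `abcd` is not a square in `E = K(a,b,c,d)`. -/
theorem not_sq_abcd {K : Type} [Field K] (x : E K)
    (h : x ^ 2 = algebraMap (MvPolynomial (Fin 4) K) (E K) (X 0 * X 1 * X 2 * X 3)) : False := by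
  obtain ⟨q, hq⟩ := sq_descend _ x h
  have hG : (sp (K := K) q) ^ 2 = Polynomial.X := by
    have := congrArg (sp (K := K)) hq
    simpa [map_pow, map_mul, sp_X0, sp_X1, sp_X2, sp_X3] using this
  have := congrArg Polynomial.natDegree hG
  rw [Polynomial.natDegree_pow, Polynomial.natDegree_X] at this
  omega

/-- `(ad+bc)^(2p) - 4^p (abcd)^p` is not a square in `E = K(a,b,c,d)`. -/
theorem not_sq_P {K : Type} [Field K] [CharZero K] (p : ℕ) (hp : p.Prime) (hodd : Odd p)
    (x : E K)
    (h : x ^ 2 = algebraMap (MvPolynomial (Fin 4) K) (E K)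
      ((X 0 * X 3 + X 1 * X 2) ^ (2 * p) - 4 ^ p * (X 0 * X 1 * X 2 * X 3) ^ p)) : False := by
  have hp3 : 3 ≤ p := by
    have h2 : p ≠ 2 := fun hq => by rw [hq] at hodd; exact (by decide : ¬ Odd 2) hodd
    have := hp.two_le
    omega
  obtain ⟨q, hq⟩ := sq_descend _ x h
  set G : Polynomial K := sp q with hGdef
  set Y : Polynomial K := (Polynomial.X + 1) ^ p with hYdef
  have hG : G ^ 2 = (Polynomial.X + 1) ^ (2 * p) - 4 ^ p * Polynomial.X ^ p := by
    have := congrArg (sp (K := K)) hq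
    simpa [map_pow, map_mul, map_sub, map_add, map_ofNat, sp_X0, sp_X1, sp_X2, sp_X3]
      using this
  have hY : Y ^ 2 = (Polynomial.X + 1) ^ (2 * p) := by
    rw [hYdef, ← pow_mul, mul_comm]
  have key : (Y - G) * (Y + G) = 4 ^ p * Polynomial.X ^ p := by
    linear_combination hY - hG
  have hu4 : IsUnit ((4 : Polynomial K) ^ p) := by
    have h4 : (4 : Polynomial K) = Polynomial.C (4 : K) := (map_ofNat Polynomial.C 4).symm
    rw [h4, ← map_pow]
    exact Polynomial.isUnit_C.mpr (isUnit_iff_ne_zero.mpr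
      (pow_ne_zero _ (by norm_num : (4 : K) ≠ 0)))
  have hdvd1 : Y - G ∣ Polynomial.X ^ p := by
    have : Y - G ∣ (4 : Polynomial K) ^ p * Polynomial.X ^ p := ⟨Y + G, key.symm⟩
    exact (IsUnit.dvd_mul_left hu4).mp this
  have hdvd2 : Y + G ∣ Polynomial.X ^ p := by
    have : Y + G ∣ (4 : Polynomial K) ^ p * Polynomial.X ^ p := ⟨Y - G, by rw [← key]; ring⟩
    exact (IsUnit.dvd_mul_left hu4).mp this
  obtain ⟨i, hi, hai⟩ := (dvd_prime_pow Polynomial.prime_X p).mp hdvd1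
  obtain ⟨j, hj, haj⟩ := (dvd_prime_pow Polynomial.prime_X p).mp hdvd2
  obtain ⟨u1, hu1⟩ := hai.symm
  obtain ⟨u2, hu2⟩ := haj.symm
  obtain ⟨c1, -, hc1⟩ := Polynomial.isUnit_iff.mp u1.isUnit
  obtain ⟨c2, -, hc2⟩ := Polynomial.isUnit_iff.mp u2.isUnit
  rw [← hc1] at hu1
  rw [← hc2] at hu2
  have hsum : 2 * Y = Polynomial.X ^ i * Polynomial.C c1 + Polynomial.X ^ j * Polynomial.C c2 := by
    linear_combination -hu1 - hu2
  obtain ⟨k, hk2, hki, hkj⟩ : ∃ k, k ≤ 2 ∧ k ≠ i ∧ k ≠ j := by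
    by_cases h0 : i = 0 ∨ j = 0
    · by_cases h1 : i = 1 ∨ j = 1
      · exact ⟨2, le_refl 2, by omega, by omega⟩
      · push_neg at h1; exact ⟨1, by omega, by omega, by omega⟩
    · push_neg at h0; exact ⟨0, by omega, by omega, by omega⟩
  have hco := congrArg (fun g : Polynomial K => g.coeff k) hsum
  simp only [Polynomial.coeff_add, Polynomial.coeff_mul_C] at hco
  rw [Polynomial.coeff_X_pow, Polynomial.coeff_X_pow, if_neg hki, if_neg hkj] at hco
  have hYco : (2 * Y).coeff k = 2 * (p.choose k : K) := by
    rw [hYdef, add_comm Polynomial.X 1, Polynomial.coeff_ofNat_mul,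
      Polynomial.coeff_one_add_X_pow]
  rw [hYco] at hco
  have hnat : ((2 * p.choose k : ℕ) : K) = 0 := by push_cast; linear_combination hco
  have h0 : 2 * p.choose k = 0 := Nat.cast_eq_zero.mp hnat
  have := Nat.choose_pos (show k ≤ p by omega)
  omega

/-- In `E = K(a,b,c,d)` (`K` of characteristic zero, `p` an odd prime), with `u, v, w`
as in the Chern connection computation for the split symmetric `2 × 2` matrix,
the polynomial `t⁴ − 4u t² + 4vw` is irreducible over `E`. -/
theorem stmt11 (K : Type) [Field K] [CharZero K] (p : ℕ) (hp : p.Prime) (hodd : Odd p)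
    (a b c d : E K) (ha : a = va K) (hb : b = vb K) (hc : c = vc K) (hd : d = vd K)
    (u v w : E K)
    (hu : u = ((a ^ p * d ^ p + b ^ p * c ^ p) * (a * d + b * c) ^ p
          - 2 ^ (p + 1) * a ^ p * b ^ p * c ^ p * d ^ p)
        / (a ^ p * d ^ p - b ^ p * c ^ p) ^ 2)
    (hv : v = b ^ p * d ^ p * (2 ^ p * (a ^ p * d ^ p + b ^ p * c ^ p)
          - 2 * (a * d + b * c) ^ p) / (a ^ p * d ^ p - b ^ p * c ^ p) ^ 2)
    (hw : w = a ^ p * c ^ p * (2 ^ p * (a ^ p * d ^ p + b ^ p * c ^ p)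
          - 2 * (a * d + b * c) ^ p) / (a ^ p * d ^ p - b ^ p * c ^ p) ^ 2) :
    Irreducible (Polynomial.X ^ 4 - Polynomial.C (4 * u) * Polynomial.X ^ 2
      + Polynomial.C (4 * v * w)) := by
  have hp3 : 3 ≤ p := by
    have h2 : p ≠ 2 := fun hq => by rw [hq] at hodd; exact (by decide : ¬ Odd 2) hodd
    have := hp.two_le
    omega
  -- translations to the polynomial ring
  have hAD_eq : a ^ p * d ^ p - b ^ p * c ^ p
      = algebraMap (MvPolynomial (Fin 4) K) (E K)
        ((X 0) ^ p * (X 3) ^ p - (X 1) ^ p * (X 2) ^ p) := by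
    rw [ha, hb, hc, hd]; simp [va, vb, vc, vd, map_sub, map_mul, map_pow]
  have habcd_eq : a * b * c * d
      = algebraMap (MvPolynomial (Fin 4) K) (E K) (X 0 * X 1 * X 2 * X 3) := by
    rw [ha, hb, hc, hd]; simp [va, vb, vc, vd, map_mul]
  have hM_eq : (2 : E K) ^ p * (a ^ p * d ^ p + b ^ p * c ^ p) - 2 * (a * d + b * c) ^ p
      = algebraMap (MvPolynomial (Fin 4) K) (E K)
        ((2 : MvPolynomial (Fin 4) K) ^ p * ((X 0) ^ p * (X 3) ^ p + (X 1) ^ p * (X 2) ^ p)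
          - 2 * (X 0 * X 3 + X 1 * X 2) ^ p) := by
    rw [ha, hb, hc, hd]
    simp [va, vb, vc, vd, map_sub, map_add, map_mul, map_pow, map_ofNat]
  have hP_eq : (a * d + b * c) ^ (2 * p) - 4 ^ p * (a * b * c * d) ^ p
      = algebraMap (MvPolynomial (Fin 4) K) (E K)
        ((X 0 * X 3 + X 1 * X 2) ^ (2 * p) - 4 ^ p * (X 0 * X 1 * X 2 * X 3) ^ p) := by
    rw [ha, hb, hc, hd]
    simp [va, vb, vc, vd, map_sub, map_add, map_mul, map_pow, map_ofNat]
  -- nonvanishing facts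
  have hADne : a ^ p * d ^ p - b ^ p * c ^ p ≠ 0 := by
    rw [hAD_eq]
    apply map_ne_zero'
    apply ne_zero_of_eval _ ![1, 0, 0, 1]
    simp [zero_pow hp.ne_zero]
  have hMne : (2 : E K) ^ p * (a ^ p * d ^ p + b ^ p * c ^ p) - 2 * (a * d + b * c) ^ p ≠ 0 := by
    rw [hM_eq]
    apply map_ne_zero'
    apply ne_zero_of_eval _ ![1, 0, 0, 1]
    simp [zero_pow hp.ne_zero]
    intro hcontr
    have hnat : ((2 ^ p : ℕ) : K) = ((2 : ℕ) : K) := by push_cast; linear_combination hcontr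
    have h2p : (2 : ℕ) ^ p = 2 := Nat.cast_injective hnat
    have : 2 ^ 3 ≤ 2 ^ p := Nat.pow_le_pow_right (by norm_num) hp3
    omega
  have habcdne : a * b * c * d ≠ 0 := by
    rw [habcd_eq]
    apply map_ne_zero'
    apply ne_zero_of_eval _ ![1, 1, 1, 1]
    simp
  -- the two non-squareness statements
  have hN2 : ∀ z : E K, z ^ 2 ≠ v * w := by
    intro z hz
    obtain ⟨k, hk⟩ := hodd
    rw [hk] at hv hw hADne hMne
    have hvw' : v * w * ((a ^ (2 * k + 1) * d ^ (2 * k + 1)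
          - b ^ (2 * k + 1) * c ^ (2 * k + 1)) ^ 2) ^ 2
        = (a * b * c * d) ^ (2 * k + 1) *
          ((2 : E K) ^ (2 * k + 1) * (a ^ (2 * k + 1) * d ^ (2 * k + 1)
            + b ^ (2 * k + 1) * c ^ (2 * k + 1)) - 2 * (a * d + b * c) ^ (2 * k + 1)) ^ 2 := by
      rw [hv, hw]
      rw [div_mul_div_comm, div_mul_eq_mul_div,
        div_eq_iff (mul_ne_zero (pow_ne_zero 2 hADne) (pow_ne_zero 2 hADne))]
      ring
    have hden : (a * b * c * d) ^ k *
        ((2 : E K) ^ (2 * k + 1) * (a ^ (2 * k + 1) * d ^ (2 * k + 1)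
          + b ^ (2 * k + 1) * c ^ (2 * k + 1)) - 2 * (a * d + b * c) ^ (2 * k + 1)) ≠ 0 :=
      mul_ne_zero (pow_ne_zero _ habcdne) hMne
    have hkey : (z * (a ^ (2 * k + 1) * d ^ (2 * k + 1)
          - b ^ (2 * k + 1) * c ^ (2 * k + 1)) ^ 2) ^ 2
        = a * b * c * d * ((a * b * c * d) ^ k *
          ((2 : E K) ^ (2 * k + 1) * (a ^ (2 * k + 1) * d ^ (2 * k + 1)
            + b ^ (2 * k + 1) * c ^ (2 * k + 1)) - 2 * (a * d + b * c) ^ (2 * k + 1))) ^ 2 := by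
      rw [mul_pow, hz]
      linear_combination hvw'
    refine not_sq_abcd (z * (a ^ (2 * k + 1) * d ^ (2 * k + 1)
        - b ^ (2 * k + 1) * c ^ (2 * k + 1)) ^ 2 /
      ((a * b * c * d) ^ k *
        ((2 : E K) ^ (2 * k + 1) * (a ^ (2 * k + 1) * d ^ (2 * k + 1)
          + b ^ (2 * k + 1) * c ^ (2 * k + 1)) - 2 * (a * d + b * c) ^ (2 * k + 1)))) ?_
    rw [div_pow, hkey, mul_div_cancel_right₀ _ (pow_ne_zero 2 hden), habcd_eq]
  have hN1 : ∀ z : E K, z ^ 2 ≠ u ^ 2 - v * w := by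
    intro z hz
    have huvw : (u ^ 2 - v * w) * ((a ^ p * d ^ p - b ^ p * c ^ p) ^ 2)
        = (a * d + b * c) ^ (2 * p) - 4 ^ p * (a * b * c * d) ^ p := by
      have h4 : (4 : E K) ^ p = 2 ^ p * 2 ^ p := by
        rw [show (4 : E K) = 2 * 2 by norm_num, mul_pow]
      rw [hu, hv, hw, h4]
      field_simp
      ring
    have hkey : (z * (a ^ p * d ^ p - b ^ p * c ^ p)) ^ 2
        = (a * d + b * c) ^ (2 * p) - 4 ^ p * (a * b * c * d) ^ p := by
      rw [mul_pow, hz]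
      linear_combination huvw
    exact not_sq_P p hp hodd (z * (a ^ p * d ^ p - b ^ p * c ^ p)) (by rw [hkey, hP_eq])
  -- assemble
  have hconv : (Polynomial.X ^ 4 - Polynomial.C (4 * u) * Polynomial.X ^ 2
      + Polynomial.C (4 * v * w) : Polynomial (E K))
      = Polynomial.X ^ 4 + Polynomial.C (-(4 * u)) * Polynomial.X ^ 2
        + Polynomial.C (4 * (v * w)) := by
    rw [map_neg, show (4 : E K) * (v * w) = 4 * v * w by ring]
    ring
  rw [hconv]
  refine quartic_irred (-(4 * u)) (4 * (v * w)) (fun z hz => hN2 (z / 2) ?_)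
    (fun z hz => hN1 (z / 4) ?_)
  · field_simp
    linear_combination hz
  · field_simp
    linear_combination hz
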